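/- Let e^1,…,e^d be the standard basis of ℝ^d with the Euclidean norm, and set x^j = (1/(2d)) e^j for j = 1,…,d and x^{d+1} = −(1/(2d)) ∑_{j=1}^d e^j. Then the closed Euclidean unit ball B₂ is contained in the union of the open unit balls B°₂(x^j), j = 1,…,d+1. -/

import Mathlib

open Finset

set_option maxHeartbeats 1000000 in
theorem stmt3 (d : ℕ) (hd : 1 ≤ d) :
    Metric.closedBall (0 : EuclideanSpace ℝ (Fin d)) 1 ⊆
      (⋃ j : Fin d, Metric.ball ((1 / (2 * (d : ℝ))) • EuclideanSpace.single j 1) 1) ∪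
      Metric.ball (-((1 / (2 * (d : ℝ))) • ∑ j : Fin d, EuclideanSpace.single j 1)) 1 := by
  intro x hx
  by_contra hcon
  simp only [Set.mem_union, Set.mem_iUnion, Metric.mem_ball, not_or, not_exists, not_lt] at hcon
  obtain ⟨h1, h2⟩ := hcon
  have hd' : (1 : ℝ) ≤ (d : ℝ) := by exact_mod_cast hd
  set c : ℝ := 1 / (2 * (d : ℝ)) with hc
  clear_value c
  have hcpos : 0 < c := by rw [hc]; positivity
  have hxnorm : ‖x‖ ≤ 1 := by simpa using hx
  have hr2 : ‖x‖ ^ 2 ≤ 1 := by nlinarith [norm_nonneg x]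
  -- inner product with single j
  have hinner : ∀ j : Fin d, inner ℝ x (EuclideanSpace.single j (1:ℝ)) = x j := by
    intro j
    rw [EuclideanSpace.inner_single_right]
    simp
  have hxj : ∀ j : Fin d, x j ≤ c / 2 := by
    intro j
    have h := h1 j
    rw [dist_eq_norm] at h
    have h' : 1 ≤ ‖x - c • EuclideanSpace.single j (1:ℝ)‖ ^ 2 := by nlinarith [norm_nonneg (x - c • EuclideanSpace.single j (1:ℝ))]
    rw [norm_sub_sq_real, real_inner_smul_right, hinner j] at h'
    have hns : ‖c • EuclideanSpace.single j (1:ℝ)‖ = c := by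
      rw [norm_smul, EuclideanSpace.norm_single]
      simp [abs_of_pos hcpos]
    rw [hns] at h'
    nlinarith
  -- the sum center
  set s : EuclideanSpace ℝ (Fin d) := ∑ j : Fin d, EuclideanSpace.single j (1:ℝ) with hs
  clear_value s
  have hinns : inner ℝ x s = ∑ j : Fin d, x j := by
    rw [hs, inner_sum]
    exact Finset.sum_congr rfl fun j _ => hinner j
  have hss : (inner ℝ s s : ℝ) = d := by
    rw [hs, inner_sum]
    have hone : ∀ j : Fin d,
        (inner ℝ (∑ i : Fin d, EuclideanSpace.single i (1:ℝ)) (EuclideanSpace.single j (1:ℝ)) : ℝ) = 1 := by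
      intro j
      rw [sum_inner]
      simp [EuclideanSpace.inner_single_left, EuclideanSpace.single_apply]
    rw [Finset.sum_congr rfl fun j _ => hone j]
    simp
  have hS : 1 ≤ ‖x‖ ^ 2 + 2 * c * (∑ j : Fin d, x j) + c ^ 2 * d := by
    have h := h2
    rw [dist_eq_norm, sub_neg_eq_add] at h
    have h' : 1 ≤ ‖x + c • s‖ ^ 2 := by nlinarith [norm_nonneg (x + c • s)]
    rw [norm_add_sq_real, real_inner_smul_right, hinns] at h'
    have : ‖c • s‖ ^ 2 = c ^ 2 * d := by
      rw [← real_inner_self_eq_norm_sq, real_inner_smul_left, real_inner_smul_right, hss]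
      ring
    rw [this] at h'
    linarith
  -- coordinatewise bounds
  have hnormeq : ‖x‖ ^ 2 = ∑ j : Fin d, (x j) ^ 2 := by
    rw [EuclideanSpace.norm_eq, Real.sq_sqrt (by positivity)]
    exact Finset.sum_congr rfl fun j _ => by rw [Real.norm_eq_abs, sq_abs]
  have habs : ∀ j : Fin d, |x j| ≤ 1 := by
    intro j
    have : (x j) ^ 2 ≤ ‖x‖ ^ 2 := by
      rw [hnormeq]
      exact Finset.single_le_sum (f := fun j => (x j)^2) (fun i _ => sq_nonneg _) (Finset.mem_univ j)
    nlinarith [abs_nonneg (x j), sq_abs (x j)]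
  have key : ∀ j : Fin d, (x j) ^ 2 ≤ c - x j := by
    intro j
    have h1 := hxj j
    have h2 := habs j
    have : (x j)^2 = |x j|^2 := (sq_abs _).symm
    rcases abs_cases (x j) with ⟨he, _⟩ | ⟨he, _⟩ <;> nlinarith
  have hsum : ‖x‖ ^ 2 ≤ (d : ℝ) * c - ∑ j : Fin d, x j := by
    rw [hnormeq]
    calc ∑ j : Fin d, (x j) ^ 2 ≤ ∑ j : Fin d, (c - x j) :=
          Finset.sum_le_sum fun j _ => key j
      _ = (d : ℝ) * c - ∑ j : Fin d, x j := by
          rw [Finset.sum_sub_distrib]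
          simp [mul_comm]
  -- final contradiction
  have hcd : c * (d : ℝ) = 1 / 2 := by
    rw [hc]; field_simp
  have hdc : (d : ℝ) * c = 1 / 2 := by rw [mul_comm]; exact hcd
  have hc12 : c ≤ 1 / 2 := by nlinarith
  have hSle : ∑ j : Fin d, x j ≤ 1 / 2 - ‖x‖ ^ 2 := by linarith
  have hc2d : c ^ 2 * (d : ℝ) = c / 2 := by
    calc c ^ 2 * (d : ℝ) = c * (c * d) := by ring
      _ = c / 2 := by rw [hcd]; ring
  rw [hc2d] at hS
  nlinarith [mul_le_mul_of_nonneg_left hSle (by positivity : (0:ℝ) ≤ 2 * c),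
    mul_nonneg (by linarith : (0:ℝ) ≤ 1 - 2 * c) (by linarith : (0:ℝ) ≤ 1 - ‖x‖ ^ 2)]
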